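/- Let n ≥ 1 and let β ∈ ℂ with β ≠ 0, and define the polynomial P̄_n(z) = (1 − z/β)^n · Σ_{j=0}^{n−1} (z/β)^j · (n+j−1)!/(j!(n−1)!). Then P̄_n has degree 2n−1 and satisfies the Hermite interpolation conditions: P̄_n(0) = 1, P̄_n(β) = 0, and the j-th derivatives satisfy P̄_n^{(j)}(0) = 0 and P̄_n^{(j)}(β) = 0 for j = 1,…,n−1. -/

import Mathlib

open Polynomial


/-- The ensemble average polynomial
`P̄_n(z) = (1 - z/β)^n ∑_{j=0}^{n-1} (z/β)^j (n+j-1)!/(j!(n-1)!)`. -/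
noncomputable def ensembleAvg (n : ℕ) (β : ℂ) (z : ℂ) : ℂ :=
  (1 - z / β) ^ n * ∑ j ∈ Finset.range n,
    (z / β) ^ j *
      ((Nat.factorial (n + j - 1) : ℂ) /
        ((Nat.factorial j : ℂ) * (Nat.factorial (n - 1) : ℂ)))


noncomputable def B0 (n : ℕ) : Polynomial ℂ :=
  ∑ j ∈ Finset.range n, C (((n - 1 + j).choose (n - 1) : ℕ) : ℂ) * X ^ j

noncomputable def P0 (n : ℕ) : Polynomial ℂ := (1 - X) ^ n * B0 n

lemma coeff_B0 (n m : ℕ) :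
    (B0 n).coeff m = if m < n then (((n - 1 + m).choose (n - 1) : ℕ) : ℂ) else 0 := by
  rw [B0, finset_sum_coeff]
  simp_rw [coeff_C_mul, coeff_X_pow, mul_ite, mul_one, mul_zero, Finset.sum_ite_eq,
    Finset.mem_range]

lemma coeff_P0 (n k : ℕ) (hn : 1 ≤ n) (hk : k < n) :
    (P0 n).coeff k = if k = 0 then 1 else 0 := by
  obtain ⟨d, rfl⟩ : ∃ d, n = d + 1 := ⟨n - 1, by omega⟩
  have hprod : ((1 - PowerSeries.X : PowerSeries ℂ) ^ (d + 1)) *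
      (PowerSeries.mk fun j => (((d + j).choose d : ℕ) : ℂ)) = 1 := by
    have := PowerSeries.mk_add_choose_mul_one_sub_pow_eq_one (S := ℂ) d
    rw [mul_comm] at this
    convert this using 3
  have h2 := congrArg (PowerSeries.coeff k) hprod
  rw [PowerSeries.coeff_mul, PowerSeries.coeff_one] at h2
  rw [show (P0 (d+1)).coeff k = (PowerSeries.coeff k) ((P0 (d+1) : Polynomial ℂ) : PowerSeries ℂ)
    from (Polynomial.coeff_coe _ _).symm]
  rw [P0, Polynomial.coe_mul, Polynomial.coe_pow, Polynomial.coe_sub, Polynomial.coe_one,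
    Polynomial.coe_X, PowerSeries.coeff_mul]
  rw [← h2]
  apply Finset.sum_congr rfl
  intro p hp
  congr 1
  rw [Polynomial.coeff_coe, coeff_B0, PowerSeries.coeff_mk]
  have hj : p.2 < d + 1 := by
    have := Finset.HasAntidiagonal.antidiagonal.snd_le hp
    omega
  simp [hj, show d + 1 - 1 = d from rfl]

lemma coeff_comp_C_mul_X (p : Polynomial ℂ) (b : ℂ) (k : ℕ) :
    (p.comp (C b * X)).coeff k = b ^ k * p.coeff k := by
  induction p using Polynomial.induction_on' with
  | add p q hp hq => simp [add_comp, hp, hq, mul_add]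
  | monomial i a =>
      rw [monomial_comp, coeff_monomial]
      rw [mul_pow, ← C_pow, ← mul_assoc, ← C_mul, C_mul_X_pow_eq_monomial, coeff_monomial]
      split
      · next h => subst h; ring
      · simp

lemma natDegree_B0 (n : ℕ) (hn : 1 ≤ n) : (B0 n).natDegree = n - 1 := by
  apply le_antisymm
  · rw [natDegree_le_iff_coeff_eq_zero]
    intro m hm
    rw [coeff_B0]
    simp [show ¬ m < n by omega]
  · apply le_natDegree_of_ne_zero
    rw [coeff_B0]
    have : (0:ℕ) < (n - 1 + (n-1)).choose (n-1) :=
      Nat.choose_pos (by omega)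
    simp only [show n - 1 < n by omega, if_true]
    exact_mod_cast this.ne'

lemma B0_ne_zero (n : ℕ) (hn : 1 ≤ n) : B0 n ≠ 0 := by
  intro h
  have h1 := coeff_B0 n (n-1)
  rw [h] at h1
  simp only [coeff_zero, show n - 1 < n by omega, if_true] at h1
  have h2 : (0:ℕ) < (n - 1 + (n-1)).choose (n-1) := Nat.choose_pos (by omega)
  rw [eq_comm, Nat.cast_eq_zero] at h1
  omega

lemma natDegree_P0 (n : ℕ) (hn : 1 ≤ n) : (P0 n).natDegree = 2 * n - 1 := by
  rw [P0, natDegree_mul (pow_ne_zero _ ?h1) (B0_ne_zero n hn), natDegree_pow, natDegree_B0 n hn]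
  case h1 =>
    intro h
    have := congrArg (Polynomial.coeff · 1) h
    simp only [coeff_sub, coeff_one, coeff_X_one, coeff_zero] at this
    norm_num at this
  have : (1 - X : Polynomial ℂ).natDegree = 1 := by
    rw [show (1 - X : Polynomial ℂ) = -(X - C 1) by simp, natDegree_neg, natDegree_X_sub_C]
  rw [this]
  omega

/-- `P̄_n` is the Hermite interpolation polynomial of degree `2n-1` with
`P̄_n(0) = 1`, `P̄_n(β) = 0` and vanishing derivatives of order `1,…,n-1` at `0` and `β`. -/
theorem ensembleAvg_hermite (n : ℕ) (hn : 1 ≤ n) (β : ℂ) (hβ : β ≠ 0)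
    (P : Polynomial ℂ) (hP : ∀ z : ℂ, P.eval z = ensembleAvg n β z) :
    P.natDegree = 2 * n - 1 ∧ P.eval 0 = 1 ∧ P.eval β = 0 ∧
      ∀ j : ℕ, 1 ≤ j → j ≤ n - 1 →
        (Polynomial.derivative^[j] P).eval 0 = 0 ∧
          (Polynomial.derivative^[j] P).eval β = 0 := by
  have hq : (C β⁻¹ * X : Polynomial ℂ).natDegree = 1 := natDegree_C_mul_X _ (inv_ne_zero hβ)
  have hc : ∀ j : ℕ, (((n - 1 + j).choose (n - 1) : ℕ) : ℂ)
      = (Nat.factorial (n + j - 1) : ℂ) /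
          ((Nat.factorial j : ℂ) * (Nat.factorial (n - 1) : ℂ)) := by
    intro j
    have h2 := Nat.choose_mul_factorial_mul_factorial (show n - 1 ≤ n - 1 + j by omega)
    rw [show n - 1 + j - (n - 1) = j from by omega] at h2
    rw [show n + j - 1 = n - 1 + j from by omega,
      eq_div_iff (mul_ne_zero (Nat.cast_ne_zero.mpr j.factorial_ne_zero)
        (Nat.cast_ne_zero.mpr (n-1).factorial_ne_zero))]
    rw [← h2]
    push_cast
    ring
  have hPeq : P = (P0 n).comp (C β⁻¹ * X) := by
    apply Polynomial.funext
    intro z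
    rw [hP, eval_comp, eval_mul, eval_C, eval_X, P0, eval_mul, eval_pow, eval_sub, eval_one,
      eval_X, B0, eval_finset_sum, ensembleAvg, div_eq_inv_mul]
    congr 1
    apply Finset.sum_congr rfl
    intro j _
    rw [eval_mul, eval_C, eval_pow, eval_X, hc, mul_comm]
  have hcoeff : ∀ k, P.coeff k = β⁻¹ ^ k * (P0 n).coeff k := by
    intro k; rw [hPeq, coeff_comp_C_mul_X]
  have heval0 : P.eval 0 = 1 := by
    rw [← coeff_zero_eq_eval_zero, hcoeff, coeff_P0 n 0 hn (by omega)]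
    simp
  refine ⟨?_, heval0, ?_, ?_⟩
  · rw [hPeq, natDegree_comp, hq, natDegree_P0 n hn, mul_one]
  · rw [hP, ensembleAvg, div_self hβ]
    simp [zero_pow (show n ≠ 0 by omega)]
  · have hPne : P ≠ 0 := fun h => by simp [h] at heval0
    have hdvd : (X - C β) ^ n ∣ P := by
      rw [hPeq, P0, mul_comp, pow_comp, sub_comp, one_comp, X_comp]
      have h3 : (1 - C β⁻¹ * X : Polynomial ℂ) = C (-β⁻¹) * (X - C β) := by
        rw [map_neg, neg_mul, mul_sub, ← C_mul, inv_mul_cancel₀ hβ, map_one]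
        ring
      rw [h3, mul_pow]
      exact dvd_mul_of_dvd_left (dvd_mul_left _ _) _
    have hroot : n ≤ P.rootMultiplicity β := (le_rootMultiplicity_iff hPne).mpr hdvd
    intro j hj1 hj2
    refine ⟨?_, isRoot_iterate_derivative_of_lt_rootMultiplicity
      (lt_of_lt_of_le (by omega) hroot)⟩
    rw [← coeff_zero_eq_eval_zero, coeff_iterate_derivative, zero_add, hcoeff,
      coeff_P0 n j hn (by omega), if_neg (show j ≠ 0 by omega)]
    simp
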